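/- arXiv:2602.19978 — 4 statements merged into one kernel-verified Lean document; each statement's English description precedes it below -/
import Mathlib

section
/- Suppose ℓ ∈ A_1 is a strong Lefschetz element of A and let j > 0 be an integer. Then the image of ℓ is a strong Lefschetz element of A/(0 :_A (ℓ^j)); concretely, for all integers i, k ≥ 0, either every a ∈ A_i with ℓ^{j+k} a = 0 satisfies ℓ^j a = 0, or for every b ∈ A_{i+k} there exists a ∈ A_i with ℓ^j b = ℓ^{j+k} a. -/
/-- If `ℓ ∈ A_1` is a strong Lefschetz element of a graded Artinian `k`-algebra `A`
(char `k` = 0, `A_0 = k`) and `j > 0`, then the image of `ℓ` is a strong Lefschetz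
element of `A/(0 : (ℓ^j))`: for all `i, c ≥ 0`, either every `a ∈ A_i` with
`ℓ^{j+c} a = 0` satisfies `ℓ^j a = 0`, or for every `b ∈ A_{i+c}` there is `a ∈ A_i`
with `ℓ^j b = ℓ^{j+c} a`. -/
theorem stmt10 (k A : Type) [Field k] [CharZero k] [CommRing A] [Algebra k A]
    (𝒜 : ℕ → Submodule k A) [GradedAlgebra 𝒜] [FiniteDimensional k A]
    (h0 : ∀ a ∈ 𝒜 0, ∃ c : k, algebraMap k A c = a)
    (l : A) (hl : l ∈ 𝒜 1)
    (hSL : ∀ i j : ℕ, (∀ a ∈ 𝒜 i, l ^ j * a = 0 → a = 0) ∨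
      (∀ b ∈ 𝒜 (i + j), ∃ a ∈ 𝒜 i, l ^ j * a = b))
    (j : ℕ) (hj : 0 < j) :
    ∀ i c : ℕ,
      (∀ a ∈ 𝒜 i, l ^ (j + c) * a = 0 → l ^ j * a = 0) ∨
      (∀ b ∈ 𝒜 (i + c), ∃ a ∈ 𝒜 i, l ^ j * b = l ^ (j + c) * a) := by
  intro i c
  rcases hSL i (j + c) with h | h
  · left
    intro a ha hla
    rw [h a ha hla, mul_zero]
  · right
    intro b hb
    have hbj : l ^ j * b ∈ 𝒜 (i + (j + c)) := by
      have := SetLike.mul_mem_graded (SetLike.pow_mem_graded j hl) hb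
      convert this using 2
      simp only [smul_eq_mul, mul_one]
      omega
    obtain ⟨a, ha, hae⟩ := h (l ^ j * b) hbj
    exact ⟨a, ha, hae.symm⟩
end

section
/- Let d_1,…,d_{n+1} be positive integers and G = (x_1^{d_1},…,x_n^{d_n}) : (ℓ^{d_{n+1}}) ⊆ R. Then R/G has the strong Lefschetz property with ℓ as a strong Lefschetz element. -/
open MvPolynomial

set_option linter.unusedSectionVars false
set_option maxHeartbeats 1000000

namespace SLP

variable {k V : Type*} [Field k] [CharZero k] [AddCommGroup V] [Module k V]

lemma pow_apply_succ (T : Module.End k V) (m : ℕ) (v : V) :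
    (T ^ (m + 1)) v = (T ^ m) (T v) := by
  rw [pow_succ, Module.End.mul_apply]

lemma pow_apply_succ' (T : Module.End k V) (m : ℕ) (v : V) :
    (T ^ (m + 1)) v = T ((T ^ m) v) := by
  rw [pow_succ', Module.End.mul_apply]

lemma pow_apply_add (T : Module.End k V) (a b : ℕ) (v : V) :
    (T ^ (a + b)) v = (T ^ a) ((T ^ b) v) := by
  rw [pow_add, Module.End.mul_apply]

variable {Q : ℕ → Submodule k V} {E F : Module.End k V} {s : ℕ}

lemma pow_mem (hE : ∀ i, ∀ v ∈ Q i, E v ∈ Q (i + 1)) :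
    ∀ m i, ∀ v ∈ Q i, (E ^ m) v ∈ Q (i + m) := by
  intro m
  induction m with
  | zero => intro i v hv; simpa using hv
  | succ m ih =>
    intro i v hv
    rw [pow_apply_succ]
    have := ih (i + 1) (E v) (hE i v hv)
    rwa [show i + 1 + m = i + (m + 1) from by omega] at this

lemma Fpow_mem (hF : ∀ i, ∀ v ∈ Q (i + 1), F v ∈ Q i) :
    ∀ m i, ∀ v ∈ Q (i + m), (F ^ m) v ∈ Q i := by
  intro m
  induction m with
  | zero => intro i v hv; simpa using hv
  | succ m ih =>
    intro i v hv
    rw [pow_apply_succ]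
    exact ih i (F v) (hF (i + m) v hv)

/-- the key commutation identity for powers -/
lemma comm_pow (hE : ∀ i, ∀ v ∈ Q i, E v ∈ Q (i + 1))
    (hcomm : ∀ i, ∀ v ∈ Q i, E (F v) - F (E v) = ((2 * (i : ℤ) - s : ℤ) : k) • v) :
    ∀ m i : ℕ, ∀ v ∈ Q i,
      F ((E ^ (m + 1)) v) = (E ^ (m + 1)) (F v)
        - ((((m : ℤ) + 1) * (2 * (i : ℤ) + (m : ℤ) - (s : ℤ)) : ℤ) : k) • (E ^ m) v := by
  intro m
  induction m with
  | zero =>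
    intro i v hv
    have h := hcomm i v hv
    simp only [zero_add, pow_one, pow_zero, Module.End.one_apply]
    have h' : F (E v) = E (F v) - ((2 * (i : ℤ) - s : ℤ) : k) • v := by
      linear_combination (norm := module) -h
    rw [h']
    match_scalars <;> push_cast <;> ring
  | succ m ih =>
    intro i v hv
    have hEv : E v ∈ Q (i + 1) := hE i v hv
    rw [show m + 1 + 1 = (m + 1) + 1 from rfl, pow_apply_succ E (m + 1) v,
      ih (i + 1) (E v) hEv]
    have h := hcomm i v hv
    have h3 : F (E v) = E (F v) - ((2 * (i : ℤ) - s : ℤ) : k) • v := by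
      linear_combination (norm := module) -h
    rw [h3, map_sub, map_smul]
    have e1 : (E ^ (m + 1)) (E (F v)) = (E ^ (m + 1 + 1)) (F v) :=
      (pow_apply_succ E (m + 1) (F v)).symm
    have e2 : (E ^ m) (E v) = (E ^ (m + 1)) v := (pow_apply_succ E m v).symm
    rw [e1, e2]
    match_scalars <;> push_cast <;> ring

/-- hard-Lefschetz injectivity -/
lemma hl_inj (hF : ∀ i, ∀ v ∈ Q (i + 1), F v ∈ Q i)
    (hF0 : ∀ v ∈ Q 0, F v = 0)
    (hE : ∀ i, ∀ v ∈ Q i, E v ∈ Q (i + 1))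
    (hcomm : ∀ i, ∀ v ∈ Q i, E (F v) - F (E v) = ((2 * (i : ℤ) - s : ℤ) : k) • v) :
    ∀ i, 2 * i ≤ s → ∀ v ∈ Q i, (E ^ (s - 2 * i)) v = 0 → v = 0 := by
  intro i
  induction i using Nat.strong_induction_on with
  | _ i IH =>
    intro hi v hv hz
    have hFv : F v = 0 := by
      match i, hv with
      | 0, hv => exact hF0 v hv
      | (i' + 1), hv =>
        have hFm : F v ∈ Q i' := hF i' v hv
        refine IH i' (by omega) (by omega) (F v) hFm ?_
        -- (E ^ (s - 2 i')) (F v) = 0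
        have hm : s - 2 * i' = (s - 2 * (i' + 1)) + 1 + 1 := by omega
        rw [hm]
        have hcp := comm_pow hE hcomm ((s - 2 * (i' + 1)) + 1) (i' + 1) v hv
        have hz1 : (E ^ (s - 2 * (i' + 1) + 1)) v = 0 := by
          rw [pow_apply_succ' E _ v, hz, map_zero]
        have hz2 : (E ^ (s - 2 * (i' + 1) + 1 + 1)) v = 0 := by
          rw [pow_apply_succ' E _ v, hz1, map_zero]
        rw [hz2, map_zero, hz1, smul_zero, sub_zero] at hcp
        exact hcp.symm
    by_contra hvne
    -- minimal power killing v
    have hex : ∃ m, (E ^ m) v = 0 := ⟨s - 2 * i, hz⟩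
    classical
    have hmle : Nat.find hex ≤ s - 2 * i := Nat.find_le hz
    have hmne : Nat.find hex ≠ 0 := by
      intro h
      apply hvne
      have := Nat.find_spec hex
      rw [h, pow_zero, Module.End.one_apply] at this
      exact this
    obtain ⟨m', hm'⟩ : ∃ m', Nat.find hex = m' + 1 := ⟨Nat.find hex - 1, by omega⟩
    have hm0 : (E ^ (m' + 1)) v = 0 := by rw [← hm']; exact Nat.find_spec hex
    have hmin : (E ^ m') v ≠ 0 := Nat.find_min hex (by omega)
    have hcp := comm_pow hE hcomm m' i v hv
    rw [hm0, map_zero, hFv, map_zero, zero_sub] at hcp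
    have hsc : ((((m' : ℤ) + 1) * (2 * (i : ℤ) + (m' : ℤ) - (s : ℤ)) : ℤ) : k) = 0 := by
      rcases smul_eq_zero.mp (neg_eq_zero.mp hcp.symm) with h | h
      · exact h
      · exact absurd h hmin
    have hz' : (((m' : ℤ) + 1) * (2 * (i : ℤ) + (m' : ℤ) - (s : ℤ)) : ℤ) = 0 := by
      exact_mod_cast hsc
    have hmle' : m' + 1 ≤ s - 2 * i := by omega
    rcases mul_eq_zero.mp hz' with h | h <;> omega


/-- mirrored injectivity: `F`-powers are injective above the middle -/
lemma hl_inj' (hF : ∀ i, ∀ v ∈ Q (i + 1), F v ∈ Q i)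
    (hF0 : ∀ v ∈ Q 0, F v = 0)
    (hE : ∀ i, ∀ v ∈ Q i, E v ∈ Q (i + 1))
    (hcomm : ∀ i, ∀ v ∈ Q i, E (F v) - F (E v) = ((2 * (i : ℤ) - s : ℤ) : k) • v)
    (htop : ∀ t, s < t → Q t = ⊥) :
    ∀ i, s ≤ 2 * i → i ≤ s → ∀ v ∈ Q i, (F ^ (2 * i - s)) v = 0 → v = 0 := by
  classical
  set Q' : ℕ → Submodule k V := fun j => if j ≤ s then Q (s - j) else ⊥ with hQ'
  have hQle : ∀ j, j ≤ s → Q' j = Q (s - j) := fun j hj => by simp [hQ', hj]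
  have hQgt : ∀ j, s < j → Q' j = ⊥ := fun j hj => by simp [hQ', Nat.not_le.mpr hj]
  have mF' : ∀ j, ∀ v ∈ Q' (j + 1), E v ∈ Q' j := by
    intro j v hv
    by_cases h1 : j + 1 ≤ s
    · rw [hQle _ h1] at hv
      rw [hQle _ (by omega)]
      have := hE (s - (j + 1)) v hv
      rwa [show s - (j + 1) + 1 = s - j from by omega] at this
    · by_cases h2 : j ≤ s
      · rw [hQgt _ (by omega)] at hv
        rw [Submodule.mem_bot] at hv
        rw [hv, map_zero, hQle _ h2]
        exact Submodule.zero_mem _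
      · rw [hQgt _ (by omega)] at hv
        rw [Submodule.mem_bot] at hv
        rw [hv, map_zero, hQgt _ (by omega)]
        exact Submodule.zero_mem _
  have mF0' : ∀ v ∈ Q' 0, E v = 0 := by
    intro v hv
    rw [hQle _ (by omega), Nat.sub_zero] at hv
    have := hE s v hv
    rw [htop (s + 1) (by omega)] at this
    simpa using this
  have mE' : ∀ j, ∀ v ∈ Q' j, F v ∈ Q' (j + 1) := by
    intro j v hv
    by_cases h1 : j + 1 ≤ s
    · rw [hQle _ (by omega)] at hv
      rw [hQle _ h1]
      have := hF (s - (j + 1)) v (by rwa [show s - (j+1) + 1 = s - j from by omega])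
      exact this
    · by_cases h2 : j ≤ s
      · rw [hQle _ h2, show s - j = 0 from by omega] at hv
        rw [hQgt _ (by omega), Submodule.mem_bot]
        exact hF0 v hv
      · rw [hQgt _ (by omega), Submodule.mem_bot] at hv
        rw [hv, map_zero, hQgt _ (by omega), Submodule.mem_bot]
  have mcomm' : ∀ j, ∀ v ∈ Q' j, F (E v) - E (F v) = ((2 * (j : ℤ) - s : ℤ) : k) • v := by
    intro j v hv
    by_cases h2 : j ≤ s
    · rw [hQle _ h2] at hv
      have h := hcomm (s - j) v hv
      have hc : ((2 * ((s - j : ℕ) : ℤ) - s : ℤ) : k) = -((2 * (j : ℤ) - s : ℤ) : k) := by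
        have : ((s - j : ℕ) : ℤ) = (s : ℤ) - j := by omega
        rw [this, ← Int.cast_neg]
        congr 1
        ring
      rw [hc] at h
      linear_combination (norm := module) -h
    · rw [hQgt _ (by omega), Submodule.mem_bot] at hv
      rw [hv]
      simp
  intro i hsi his v hv hz
  have hv' : v ∈ Q' (s - i) := by
    rw [hQle _ (by omega), show s - (s - i) = i from by omega]
    exact hv
  have := hl_inj (Q := Q') (E := F) (F := E) (s := s) mF' mF0' mE' mcomm'
    (s - i) (by omega) v hv' (by rwa [show s - 2 * (s - i) = 2 * i - s from by omega])
  exact this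

/-- hard-Lefschetz surjectivity -/
lemma hl_surj (hF : ∀ i, ∀ v ∈ Q (i + 1), F v ∈ Q i)
    (hF0 : ∀ v ∈ Q 0, F v = 0)
    (hE : ∀ i, ∀ v ∈ Q i, E v ∈ Q (i + 1))
    (hcomm : ∀ i, ∀ v ∈ Q i, E (F v) - F (E v) = ((2 * (i : ℤ) - s : ℤ) : k) • v)
    (htop : ∀ t, s < t → Q t = ⊥)
    (hfin : ∀ i, FiniteDimensional k (Q i)) :
    ∀ i, 2 * i ≤ s → ∀ w ∈ Q (s - i), ∃ v ∈ Q i, (E ^ (s - 2 * i)) v = w := by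
  intro i hi w hw
  set m := s - 2 * i with hm
  haveI := hfin i
  haveI := hfin (s - i)
  set A := Q i
  set B := Q (s - i)
  set φ : A →ₗ[k] V := (E ^ m).comp A.subtype with hφ
  set ψ : B →ₗ[k] V := (F ^ m).comp B.subtype with hψ
  have hkerφ : LinearMap.ker φ = ⊥ := by
    rw [LinearMap.ker_eq_bot']
    intro x hx
    have : (x : V) = 0 :=
      hl_inj hF hF0 hE hcomm i hi (x : V) x.2 hx
    exact Subtype.ext this
  have hkerψ : LinearMap.ker ψ = ⊥ := by
    rw [LinearMap.ker_eq_bot']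
    intro x hx
    have : (x : V) = 0 := by
      refine hl_inj' hF hF0 hE hcomm htop (s - i) (by omega) (by omega) (x : V) x.2 ?_
      rwa [show 2 * (s - i) - s = m from by omega]
    exact Subtype.ext this
  have h1 : Module.finrank k (LinearMap.range φ) = Module.finrank k A := by
    have := LinearMap.finrank_range_add_finrank_ker φ
    rw [hkerφ, finrank_bot, add_zero] at this
    exact this
  have h2 : Module.finrank k (LinearMap.range ψ) = Module.finrank k B := by
    have := LinearMap.finrank_range_add_finrank_ker ψ
    rw [hkerψ, finrank_bot, add_zero] at this
    exact this
  have hrφ : LinearMap.range φ ≤ B := by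
    rintro _ ⟨x, rfl⟩
    have := pow_mem hE m i (x : V) x.2
    rwa [show i + m = s - i from by omega] at this
  have hrψ : LinearMap.range ψ ≤ A := by
    rintro _ ⟨x, rfl⟩
    refine Fpow_mem hF m i (x : V) ?_
    rw [show i + m = s - i from by omega]
    exact x.2
  have hAB : Module.finrank k A ≤ Module.finrank k B :=
    h1 ▸ Submodule.finrank_mono hrφ
  have hBA : Module.finrank k B ≤ Module.finrank k A :=
    h2 ▸ Submodule.finrank_mono hrψ
  have heq : LinearMap.range φ = B :=
    Submodule.eq_of_le_of_finrank_le hrφ (by omega)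
  rw [← heq] at hw
  obtain ⟨x, hx⟩ := hw
  exact ⟨(x : V), x.2, hx⟩


lemma hl_top (hE : ∀ i, ∀ v ∈ Q i, E v ∈ Q (i + 1))
    (htop : ∀ t, s < t → Q t = ⊥) :
    ∀ j m : ℕ, s < j + m → ∀ w ∈ Q j, (E ^ m) w = 0 := by
  intro j m h w hw
  have := pow_mem hE m j w hw
  rw [htop (j + m) h] at this
  simpa using this

lemma hl_step (hF : ∀ i, ∀ v ∈ Q (i + 1), F v ∈ Q i)
    (hF0 : ∀ v ∈ Q 0, F v = 0)
    (hE : ∀ i, ∀ v ∈ Q i, E v ∈ Q (i + 1))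
    (hcomm : ∀ i, ∀ v ∈ Q i, E (F v) - F (E v) = ((2 * (i : ℤ) - s : ℤ) : k) • v)
    (htop : ∀ t, s < t → Q t = ⊥)
    (hfin : ∀ i, FiniteDimensional k (Q i)) :
    ∀ j m : ℕ, 1 ≤ j → s + 1 ≤ 2 * j + m → ∀ w ∈ Q j,
      ∃ v ∈ Q (j - 1), (E ^ m) w = (E ^ (m + 1)) v := by
  intro j m hj1 hcond w hw
  by_cases hjs : j ≤ s
  · by_cases hmid : 2 * j ≤ s
    · -- below the middle
      set e1 := s - 2 * j + 1 with he1
      have hwmem : (E ^ e1) w ∈ Q (s - (j - 1)) := by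
        have := pow_mem hE e1 j w hw
        rwa [show j + e1 = s - (j - 1) from by omega] at this
      obtain ⟨u, hu, huw⟩ := hl_surj hF hF0 hE hcomm htop hfin (j - 1) (by omega)
        ((E ^ e1) w) hwmem
      refine ⟨u, hu, ?_⟩
      have h1 : (E ^ m) w = (E ^ (m - e1)) ((E ^ e1) w) := by
        rw [← pow_apply_add, show m - e1 + e1 = m from by omega]
      rw [h1, ← huw, ← pow_apply_add, show m - e1 + (s - 2 * (j - 1)) = m + 1 + (s - 2*j + 1 - e1) from by omega,
        show s - 2*j + 1 - e1 = 0 from by omega, add_zero]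
    · -- above the middle
      obtain ⟨u, hu, huw⟩ := hl_surj hF hF0 hE hcomm htop hfin (s - j) (by omega)
        w (by rwa [show s - (s - j) = j from by omega])
      have he : s - 2 * (s - j) = 2 * j - s := by omega
      rw [he] at huw
      refine ⟨(E ^ (2 * j - s - 1)) u, ?_, ?_⟩
      · have := pow_mem hE (2 * j - s - 1) (s - j) u hu
        rwa [show s - j + (2 * j - s - 1) = j - 1 from by omega] at this
      · rw [← huw, ← pow_apply_add, ← pow_apply_add,
          show m + (2 * j - s) = m + 1 + (2 * j - s - 1) from by omega]
  · -- j out of range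
    rw [htop j (by omega), Submodule.mem_bot] at hw
    refine ⟨0, Submodule.zero_mem _, ?_⟩
    rw [hw]
    simp

lemma hl_iter (hF : ∀ i, ∀ v ∈ Q (i + 1), F v ∈ Q i)
    (hF0 : ∀ v ∈ Q 0, F v = 0)
    (hE : ∀ i, ∀ v ∈ Q i, E v ∈ Q (i + 1))
    (hcomm : ∀ i, ∀ v ∈ Q i, E (F v) - F (E v) = ((2 * (i : ℤ) - s : ℤ) : k) • v)
    (htop : ∀ t, s < t → Q t = ⊥)
    (hfin : ∀ i, FiniteDimensional k (Q i)) :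
    ∀ c j m : ℕ, s + 1 + c ≤ 2 * j + m → ∀ w ∈ Q j,
      ∃ v ∈ Q (j - c), (E ^ m) w = (E ^ (m + c)) v := by
  intro c
  induction c with
  | zero =>
    intro j m _ w hw
    exact ⟨w, by simpa using hw, rfl⟩
  | succ c ih =>
    intro j m hcond w hw
    rcases Nat.eq_zero_or_pos j with hj0 | hj1
    · refine ⟨0, Submodule.zero_mem _, ?_⟩
      rw [hl_top hE htop j m (by omega) w hw]
      simp
    · obtain ⟨v₁, hv₁, hv₁w⟩ := hl_step hF hF0 hE hcomm htop hfin j m hj1 (by omega) w hw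
      obtain ⟨v, hv, hvw⟩ := ih (j - 1) (m + 1) (by omega) v₁ hv₁
      refine ⟨v, by rwa [show j - 1 - c = j - (c + 1) from by omega] at hv, ?_⟩
      rw [hv₁w, hvw, show m + 1 + c = m + (c + 1) from by omega]

end SLP

open MvPolynomial

namespace SLPM

variable {n : ℕ} {k : Type} [Field k] [CharZero k]

/-- The monomial complete intersection ideal. -/
noncomputable def Ie (e : Fin n → ℕ) : Ideal (MvPolynomial (Fin n) k) :=
  Ideal.span (Set.range fun j : Fin n => X j ^ e j)

lemma mem_Ie {e : Fin n → ℕ} {f : MvPolynomial (Fin n) k} :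
    f ∈ Ie e ↔ ∀ a ∈ f.support, ∃ j, e j ≤ a j := by
  have hset : (Set.range fun j : Fin n => (X j : MvPolynomial (Fin n) k) ^ e j)
      = (fun s => monomial s (1 : k)) '' (Set.range fun j : Fin n => Finsupp.single j (e j)) := by
    ext p
    simp only [Set.mem_range, Set.mem_image]
    constructor
    · rintro ⟨j, rfl⟩
      exact ⟨Finsupp.single j (e j), ⟨j, rfl⟩, X_pow_eq_monomial.symm⟩
    · rintro ⟨s, ⟨j, rfl⟩, rfl⟩
      exact ⟨j, X_pow_eq_monomial⟩
  rw [Ie, hset, mem_ideal_span_monomial_image]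
  constructor
  · intro h a ha
    obtain ⟨si, ⟨j, rfl⟩, hle⟩ := h a ha
    exact ⟨j, by simpa using Finsupp.single_le_iff.mp hle⟩
  · intro h a ha
    obtain ⟨j, hj⟩ := h a ha
    exact ⟨Finsupp.single j (e j), ⟨j, rfl⟩, Finsupp.single_le_iff.mpr hj⟩

lemma monomial_mem_Ie {e : Fin n → ℕ} {a : Fin n →₀ ℕ} {c : k}
    (h : ∃ j, e j ≤ a j) : monomial a c ∈ Ie e := by
  classical
  rw [mem_Ie]
  intro b hb
  rw [support_monomial] at hb
  rcases eq_or_ne c 0 with hc | hc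
  · simp [hc] at hb
  · rw [if_neg hc, Finset.mem_singleton] at hb
    subst hb
    exact h


/-- The lowering operator, one variable at a time. -/
noncomputable def Fopj (e : Fin n → ℕ) (j : Fin n) :
    MvPolynomial (Fin n) k →ₗ[k] MvPolynomial (Fin n) k :=
  (e j : k) • (pderiv j).toLinearMap
    - (pderiv j).toLinearMap ∘ₗ (LinearMap.mulLeft k (X j)) ∘ₗ (pderiv j).toLinearMap

/-- The lowering operator. -/
noncomputable def Fop (e : Fin n → ℕ) :
    MvPolynomial (Fin n) k →ₗ[k] MvPolynomial (Fin n) k :=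
  ∑ j : Fin n, Fopj e j

lemma Fopj_apply (e : Fin n → ℕ) (j : Fin n) (f : MvPolynomial (Fin n) k) :
    Fopj e j f = (e j : k) • pderiv j f - pderiv j (X j * pderiv j f) := by
  simp [Fopj]

lemma Fop_apply (e : Fin n → ℕ) (f : MvPolynomial (Fin n) k) :
    Fop e f = ∑ j : Fin n, Fopj e j f := by
  simp [Fop]

lemma Fopj_monomial (e : Fin n → ℕ) (j : Fin n) (a : Fin n →₀ ℕ) (c : k) :
    Fopj e j (monomial a c)
      = ((a j : k) * ((e j : k) - (a j : k))) • monomial (a - Finsupp.single j 1) c := by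
  classical
  rcases Nat.eq_zero_or_pos (a j) with h0 | h1
  · rw [Fopj_apply, pderiv_monomial, h0]
    simp
  · rw [Fopj_apply, pderiv_monomial]
    have hX : X j * monomial (a - Finsupp.single j 1) (c * (a j : k))
        = monomial ((a - Finsupp.single j 1) + Finsupp.single j 1) (c * (a j : k)) := by
      rw [monomial_add_single, pow_one, mul_comm]
    rw [hX, pderiv_monomial, add_tsub_cancel_right]
    have hj : ((a - Finsupp.single j 1 + Finsupp.single j 1 : Fin n →₀ ℕ)) j = a j := by
      rw [Finsupp.add_apply, Finsupp.tsub_apply, Finsupp.single_eq_same]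
      omega
    rw [hj, smul_monomial, ← map_sub, smul_monomial]
    congr 1
    simp only [smul_eq_mul]
    ring

lemma Fop_monomial (e : Fin n → ℕ) (a : Fin n →₀ ℕ) (c : k) :
    Fop e (monomial a c)
      = ∑ j : Fin n, ((a j : k) * ((e j : k) - (a j : k))) • monomial (a - Finsupp.single j 1) c := by
  rw [Fop_apply]
  exact Finset.sum_congr rfl fun j _ => Fopj_monomial e j a c

lemma Fop_mem_Ie {e : Fin n → ℕ} {f : MvPolynomial (Fin n) k} (hf : f ∈ Ie e) :
    Fop e f ∈ Ie e := by
  classical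
  rw [mem_Ie] at hf
  nth_rewrite 1 [as_sum f]
  rw [map_sum]
  refine Submodule.sum_mem _ fun a ha => ?_
  obtain ⟨t, ht⟩ := hf a ha
  rw [Fop_monomial]
  refine Submodule.sum_mem _ fun j _ => ?_
  by_cases hcase : j = t ∧ a t = e t
  · obtain ⟨rfl, h2⟩ := hcase
    have : ((a j : k) * ((e j : k) - (a j : k))) = 0 := by
      rw [h2]; ring
    rw [this, zero_smul]
    exact Submodule.zero_mem _
  · have hmem : (e t ≤ (a - Finsupp.single j 1 : Fin n →₀ ℕ) t) := by
      rw [Finsupp.tsub_apply]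
      rcases eq_or_ne j t with rfl | hne
      · have : a j ≠ e j := fun h => hcase ⟨rfl, h⟩
        rw [Finsupp.single_eq_same]
        omega
      · rw [Finsupp.single_eq_of_ne' hne]
        omega
    exact Submodule.smul_of_tower_mem _ _ (monomial_mem_Ie ⟨t, hmem⟩)


lemma degree_fintype (a : Fin n →₀ ℕ) : a.degree = ∑ j, a j := by
  rw [Finsupp.degree]
  exact Finset.sum_subset (Finset.subset_univ _)
    (fun x _ hx => Finsupp.notMem_support_iff.mp hx)

lemma degree_sub_single {a : Fin n →₀ ℕ} {j : Fin n} (h : 1 ≤ a j) :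
    (a - Finsupp.single j 1 : Fin n →₀ ℕ).degree + 1 = a.degree := by
  classical
  rw [degree_fintype, degree_fintype]
  have : ∀ x, a x = (a - Finsupp.single j 1 : Fin n →₀ ℕ) x + (Finsupp.single j 1 : Fin n →₀ ℕ) x := by
    intro x
    rw [Finsupp.tsub_apply]
    rcases eq_or_ne x j with rfl | hne
    · rw [Finsupp.single_eq_same]; omega
    · rw [Finsupp.single_eq_of_ne' (Ne.symm hne)]; omega
  rw [Finset.sum_congr rfl (fun x _ => this x), Finset.sum_add_distrib]
  congr 1
  simp [Finsupp.single_apply]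

lemma support_degree {f : MvPolynomial (Fin n) k} {i : ℕ} (hf : f.IsHomogeneous i)
    {a : Fin n →₀ ℕ} (ha : a ∈ f.support) : a.degree = i := by
  have := hf (mem_support_iff.mp ha)
  rw [Finsupp.degree_eq_weight_one]; exact this

lemma Fop_homog {e : Fin n → ℕ} {f : MvPolynomial (Fin n) k} {i : ℕ}
    (hf : f.IsHomogeneous (i + 1)) : (Fop e f).IsHomogeneous i := by
  classical
  rw [← mem_homogeneousSubmodule]
  nth_rewrite 1 [as_sum f]
  rw [map_sum]
  refine Submodule.sum_mem _ fun a ha => ?_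
  rw [Fop_monomial]
  refine Submodule.sum_mem _ fun j _ => ?_
  rcases Nat.eq_zero_or_pos (a j) with h0 | h1
  · have hz : ((a j : k) * ((e j : k) - (a j : k))) = 0 := by rw [h0]; simp
    rw [hz, zero_smul]
    exact Submodule.zero_mem _
  · refine Submodule.smul_mem _ _ ?_
    rw [mem_homogeneousSubmodule]
    refine isHomogeneous_monomial _ ?_
    have := degree_sub_single h1
    have hd := support_degree hf ha
    omega

lemma Fop_homog0 {e : Fin n → ℕ} {f : MvPolynomial (Fin n) k}
    (hf : f.IsHomogeneous 0) : Fop e f = 0 := by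
  classical
  nth_rewrite 1 [as_sum f]
  rw [map_sum]
  refine Finset.sum_eq_zero fun a ha => ?_
  have hd := support_degree hf ha
  rw [Fop_monomial]
  refine Finset.sum_eq_zero fun j _ => ?_
  have h0 : a j = 0 := by
    have := Finsupp.le_degree j a
    omega
  have hz : ((a j : k) * ((e j : k) - (a j : k))) = 0 := by rw [h0]; simp
  rw [hz, zero_smul]

lemma sub_add_single {a : Fin n →₀ ℕ} {j : Fin n} (h : 1 ≤ a j) :
    (a - Finsupp.single j 1) + Finsupp.single j 1 = a := by
  classical
  ext x
  rw [Finsupp.add_apply, Finsupp.tsub_apply]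
  rcases eq_or_ne x j with rfl | hne
  · rw [Finsupp.single_eq_same]; omega
  · rw [Finsupp.single_eq_of_ne' (Ne.symm hne)]; omega

lemma X_mul_monomial' (u : Fin n) (b : Fin n →₀ ℕ) (r : k) :
    X u * monomial b r = monomial (b + Finsupp.single u 1) r := by
  rw [monomial_add_single, pow_one, mul_comm]

lemma X_mul_pderiv_monomial (u : Fin n) (a : Fin n →₀ ℕ) (c : k) :
    X u * pderiv u (monomial a c) = (a u : k) • monomial a c := by
  classical
  rw [pderiv_monomial]
  rcases Nat.eq_zero_or_pos (a u) with h0 | h1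
  · rw [h0]
    simp
  · rw [X_mul_monomial', sub_add_single h1, smul_monomial, smul_eq_mul, mul_comm]

lemma euler {f : MvPolynomial (Fin n) k} {i : ℕ} (hf : f.IsHomogeneous i) :
    ∑ u, X u * pderiv u f = (i : k) • f := by
  classical
  have hL : ∀ u : Fin n, X u * pderiv u f
      = ∑ a ∈ f.support, (a u : k) • monomial a (coeff a f) := by
    intro u
    nth_rewrite 1 [as_sum f]
    rw [map_sum, Finset.mul_sum]
    exact Finset.sum_congr rfl fun a _ => X_mul_pderiv_monomial u a (coeff a f)
  calc ∑ u, X u * pderiv u f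
      = ∑ a ∈ f.support, ∑ u : Fin n, (a u : k) • monomial a (coeff a f) := by
        rw [Finset.sum_congr rfl fun u _ => hL u, Finset.sum_comm]
    _ = ∑ a ∈ f.support, (i : k) • monomial a (coeff a f) := by
        refine Finset.sum_congr rfl fun a ha => ?_
        rw [← Finset.sum_smul]
        congr 1
        have hd := support_degree hf ha
        rw [degree_fintype] at hd
        rw [← Nat.cast_sum, hd]
    _ = (i : k) • f := by
        rw [← Finset.smul_sum, ← as_sum f]


lemma smul_eq_C_mul' (q : k) (p : MvPolynomial (Fin n) k) : q • p = C q * p := by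
  rw [C_mul']

lemma Fopj_X_mul_ne (e : Fin n → ℕ) {j u : Fin n} (h : j ≠ u) (f : MvPolynomial (Fin n) k) :
    Fopj e j (X u * f) = X u * Fopj e j f := by
  have hXu : pderiv j (X u) = (0 : MvPolynomial (Fin n) k) := pderiv_X_of_ne (Ne.symm h)
  have h1 : pderiv j (X u * f) = X u * pderiv j f := by
    rw [pderiv_mul, hXu, zero_mul, zero_add]
  have h4 : pderiv j (X j * (X u * pderiv j f))
      = X u * pderiv j f + X j * (X u * pderiv j (pderiv j f)) := by
    rw [pderiv_mul, pderiv_X_self, one_mul, pderiv_mul, hXu, zero_mul, zero_add]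
  have h2 : pderiv j (X j * pderiv j f)
      = pderiv j f + X j * pderiv j (pderiv j f) := by
    rw [pderiv_mul, pderiv_X_self, one_mul]
  rw [Fopj_apply, Fopj_apply, h1, h4, h2]
  rw [smul_eq_C_mul', smul_eq_C_mul']
  ring

lemma Fopj_X_mul_self (e : Fin n → ℕ) (j : Fin n) (f : MvPolynomial (Fin n) k) :
    Fopj e j (X j * f) = X j * Fopj e j f + (e j : k) • f - f
      - (2 : k) • (X j * pderiv j f) := by
  have h1 : pderiv j (X j * f) = f + X j * pderiv j f := by
    rw [pderiv_mul, pderiv_X_self, one_mul]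
  have h2 : pderiv j (X j * pderiv j f)
      = pderiv j f + X j * pderiv j (pderiv j f) := by
    rw [pderiv_mul, pderiv_X_self, one_mul]
  have h3 : pderiv j (X j * (f + X j * pderiv j f))
      = (f + X j * pderiv j f) + X j * (pderiv j f + (pderiv j f + X j * pderiv j (pderiv j f))) := by
    rw [pderiv_mul, pderiv_X_self, one_mul, map_add, h2]
  rw [Fopj_apply, Fopj_apply, h1, h3]
  rw [smul_eq_C_mul', smul_eq_C_mul', smul_eq_C_mul', smul_eq_C_mul', h2, map_ofNat]
  ring


lemma Fop_X_mul (e : Fin n → ℕ) (u : Fin n) (f : MvPolynomial (Fin n) k) :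
    Fop e (X u * f) = X u * Fop e f
      + ((e u : k) • f - f - (2 : k) • (X u * pderiv u f)) := by
  classical
  rw [Fop_apply, Fop_apply, Finset.mul_sum]
  have hterm : ∀ j : Fin n, Fopj e j (X u * f)
      = X u * Fopj e j f
        + (if j = u then ((e u : k) • f - f - (2 : k) • (X u * pderiv u f)) else 0) := by
    intro j
    rcases eq_or_ne j u with rfl | hne
    · rw [if_pos rfl, Fopj_X_mul_self]
      ring
    · rw [if_neg hne, Fopj_X_mul_ne e hne, add_zero]
  rw [Finset.sum_congr rfl fun j _ => hterm j, Finset.sum_add_distrib]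
  congr 1
  rw [Finset.sum_ite_eq' Finset.univ u]
  simp

lemma cast_s_eq (e : Fin n → ℕ) (he : ∀ j, 1 ≤ e j) :
    (((∑ j, (e j - 1) : ℕ)) : k) = (∑ j, (e j : k)) - n := by
  rw [Nat.cast_sum, Finset.sum_congr rfl fun j _ => Nat.cast_sub (he j)]
  rw [Finset.sum_sub_distrib]
  simp

lemma comm_main (e : Fin n → ℕ) (he : ∀ j, 1 ≤ e j) {f : MvPolynomial (Fin n) k} {i : ℕ}
    (hf : f.IsHomogeneous i) :
    (∑ u, X u) * Fop e f - Fop e ((∑ u, X u) * f)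
      = ((2 * (i : ℤ) - ((∑ j, (e j - 1) : ℕ) : ℤ) : ℤ) : k) • f := by
  classical
  have hS : ∑ u : Fin n, ((e u : k) • f - f - (2 : k) • (X u * pderiv u f))
      = ((∑ j, (e j : k)) - n - 2 * (i : k)) • f := by
    rw [Finset.sum_sub_distrib, Finset.sum_sub_distrib, ← Finset.smul_sum, euler hf,
      ← Finset.sum_smul, Finset.sum_const, Finset.card_univ, Fintype.card_fin]
    match_scalars
    ring
  have hsum : Fop e ((∑ u, X u) * f)
      = (∑ u : Fin n, X u * Fop e f)
        + ((∑ j, (e j : k)) - n - 2 * (i : k)) • f := by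
    rw [Finset.sum_mul, map_sum, Finset.sum_congr rfl fun u _ => Fop_X_mul e u f,
      Finset.sum_add_distrib, hS]
  rw [hsum, ← Finset.sum_mul]
  have hc2 : ((2 * (i : ℤ) - ((∑ j, (e j - 1) : ℕ) : ℤ) : ℤ) : k)
      = -((∑ j, (e j : k)) - n - 2 * (i : k)) := by
    have h1 : (((∑ j, (e j - 1) : ℕ)) : ℤ) = (∑ j, (e j : ℤ)) - n := by
      rw [Nat.cast_sum, Finset.sum_congr rfl fun j _ => Nat.cast_sub (he j)]
      rw [Finset.sum_sub_distrib]
      simp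
    rw [h1]
    push_cast
    ring
  rw [hc2]
  module


lemma homog_high_mem {e : Fin n → ℕ} {f : MvPolynomial (Fin n) k} {t : ℕ}
    (hf : f.IsHomogeneous t) (ht : (∑ j, (e j - 1)) < t) : f ∈ Ie e := by
  rw [mem_Ie]
  intro a ha
  by_contra hno
  push_neg at hno
  have h1 : a.degree ≤ ∑ j, (e j - 1) := by
    rw [degree_fintype]
    exact Finset.sum_le_sum fun j _ => by have := hno j; omega
  have h2 := support_degree hf ha
  omega

lemma findim_homog (i : ℕ) :
    FiniteDimensional k (homogeneousSubmodule (Fin n) k i) := by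
  have hle : homogeneousSubmodule (Fin n) k i ≤ restrictTotalDegree (Fin n) k i :=
    fun p hp => (mem_restrictTotalDegree _ i p).mpr
      ((mem_homogeneousSubmodule i p).mp hp).totalDegree_le
  exact Submodule.finiteDimensional_of_le hle

end SLPM

open MvPolynomial

/-- For positive integers `d_1,…,d_{n+1}` and
`G = (x_1^{d_1},…,x_n^{d_n}) : (ℓ^{d_{n+1}})`, the algebra `R/G` has the strong
Lefschetz property with `ℓ = x_1 + ⋯ + x_n` as a strong Lefschetz element: for all
`i, c ≥ 0` the multiplication `(R/G)_i → (R/G)_{i+c}` by `ℓ^c` is injective or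
surjective. -/
theorem stmt11 (n : ℕ) (k : Type) [Field k] [CharZero k]
    (d : Fin (n + 1) → ℕ) (hd : ∀ i, 1 ≤ d i)
    (ℓ : MvPolynomial (Fin n) k) (hℓ : ℓ = ∑ i, X i)
    (G : Ideal (MvPolynomial (Fin n) k))
    (hG : G = (Ideal.span (Set.range fun i : Fin n => X i ^ d i.castSucc)).colon
      (Ideal.span {ℓ ^ d (Fin.last n)})) :
    ∀ i c : ℕ,
      (∀ f : MvPolynomial (Fin n) k, f.IsHomogeneous i → ℓ ^ c * f ∈ G → f ∈ G) ∨
      (∀ g : MvPolynomial (Fin n) k, g.IsHomogeneous (i + c) →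
        ∃ f : MvPolynomial (Fin n) k, f.IsHomogeneous i ∧ g - ℓ ^ c * f ∈ G) := by
  intro i c
  classical
  set e : Fin n → ℕ := fun j => d j.castSucc with he_def
  have he : ∀ j, 1 ≤ e j := fun j => hd _
  set D := d (Fin.last n) with hD
  have hD1 : 1 ≤ D := hd _
  set s := ∑ j, (e j - 1) with hs
  have hGI : G = (SLPM.Ie e).colon (Ideal.span {ℓ ^ D}) := hG
  have hmemG : ∀ f : MvPolynomial (Fin n) k, f ∈ G ↔ f * ℓ ^ D ∈ SLPM.Ie e := by
    intro f
    rw [hGI]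
    exact Ideal.mem_colon_span_singleton
  have hℓ1 : ℓ.IsHomogeneous 1 := by
    rw [hℓ]
    exact IsHomogeneous.sum _ _ _ fun u _ => isHomogeneous_X _ _
  -- quotient setup
  set J : Submodule k (MvPolynomial (Fin n) k) :=
    Submodule.restrictScalars k (SLPM.Ie e) with hJdef
  have hmk0 : ∀ f : MvPolynomial (Fin n) k, J.mkQ f = 0 ↔ f ∈ SLPM.Ie e := by
    intro f
    rw [Submodule.mkQ_apply, Submodule.Quotient.mk_eq_zero]
    exact Submodule.restrictScalars_mem k _ f
  have hleE : J ≤ J.comap (LinearMap.mulLeft k ℓ) := by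
    intro f hf
    simp only [Submodule.mem_comap, LinearMap.mulLeft_apply]
    exact Ideal.mul_mem_left _ ℓ ((Submodule.restrictScalars_mem k _ f).mp hf)
  have hleF : J ≤ J.comap (SLPM.Fop e) := by
    intro f hf
    simp only [Submodule.mem_comap]
    exact (Submodule.restrictScalars_mem k _ _).mpr
      (SLPM.Fop_mem_Ie ((Submodule.restrictScalars_mem k _ f).mp hf))
  set EQ := Submodule.mapQ J J (LinearMap.mulLeft k ℓ) hleE with hEQdef
  set FQ := Submodule.mapQ J J (SLPM.Fop e) hleF with hFQdef
  set Qs : ℕ → Submodule k (MvPolynomial (Fin n) k ⧸ J) :=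
    fun t => (homogeneousSubmodule (Fin n) k t).map J.mkQ with hQsdef
  have hEapp : ∀ f : MvPolynomial (Fin n) k, EQ (J.mkQ f) = J.mkQ (ℓ * f) := by
    intro f
    rw [Submodule.mkQ_apply, Submodule.mkQ_apply, hEQdef, Submodule.mapQ_apply,
      LinearMap.mulLeft_apply]
  have hFapp : ∀ f : MvPolynomial (Fin n) k, FQ (J.mkQ f) = J.mkQ (SLPM.Fop e f) := by
    intro f
    rw [Submodule.mkQ_apply, Submodule.mkQ_apply, hFQdef, Submodule.mapQ_apply]
  have hEpow : ∀ (m : ℕ) (f : MvPolynomial (Fin n) k),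
      (EQ ^ m) (J.mkQ f) = J.mkQ (ℓ ^ m * f) := by
    intro m
    induction m with
    | zero => intro f; simp
    | succ m ih =>
      intro f
      rw [SLP.pow_apply_succ', ih, hEapp]
      congr 1
      rw [pow_succ]
      ring
  have hEmem : ∀ t, ∀ v ∈ Qs t, EQ v ∈ Qs (t + 1) := by
    rintro t v ⟨f, hf, rfl⟩
    rw [hEapp]
    refine ⟨ℓ * f, ?_, rfl⟩
    have h := hℓ1.mul (show f.IsHomogeneous t from hf)
    rw [add_comm] at h
    exact h
  have hFmem : ∀ t, ∀ v ∈ Qs (t + 1), FQ v ∈ Qs t := by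
    rintro t v ⟨f, hf, rfl⟩
    rw [hFapp]
    exact ⟨SLPM.Fop e f, SLPM.Fop_homog hf, rfl⟩
  have hF0 : ∀ v ∈ Qs 0, FQ v = 0 := by
    rintro v ⟨f, hf, rfl⟩
    rw [hFapp, SLPM.Fop_homog0 hf, map_zero]
  have hcommQ : ∀ t, ∀ v ∈ Qs t,
      EQ (FQ v) - FQ (EQ v) = ((2 * (t : ℤ) - (s : ℤ) : ℤ) : k) • v := by
    rintro t v ⟨f, hf, rfl⟩
    rw [hFapp, hEapp, hEapp, hFapp, ← map_sub, ← map_smul]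
    congr 1
    have := SLPM.comm_main e he (f := f) (i := t) hf
    rw [← hℓ] at this
    rw [this]
  have htopQ : ∀ t, s < t → Qs t = ⊥ := by
    intro t ht
    rw [eq_bot_iff]
    rintro v ⟨f, hf, rfl⟩
    rw [Submodule.mem_bot]
    exact (hmk0 f).mpr (SLPM.homog_high_mem hf ht)
  have hfinQ : ∀ t, FiniteDimensional k (Qs t) := by
    intro t
    haveI := SLPM.findim_homog (n := n) (k := k) t
    exact Module.Finite.map _ _
  by_cases hcase : 2 * i + c + D ≤ s
  · left
    intro f hf hfG
    have h1 : ℓ ^ (c + D) * f ∈ SLPM.Ie e := by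
      have h := (hmemG _).mp hfG
      have heq : (ℓ ^ c * f) * ℓ ^ D = ℓ ^ (c + D) * f := by
        rw [pow_add]; ring
      rwa [heq] at h
    have h2 : (EQ ^ (c + D)) (J.mkQ f) = 0 := by
      rw [hEpow]
      exact (hmk0 _).mpr h1
    have h3 : (EQ ^ (s - 2 * i)) (J.mkQ f) = 0 := by
      rw [show s - 2 * i = (s - 2 * i - (c + D)) + (c + D) from by omega,
        SLP.pow_apply_add, h2, map_zero]
    have h5 : J.mkQ f = 0 :=
      SLP.hl_inj hFmem hF0 hEmem hcommQ i (by omega) _ ⟨f, hf, rfl⟩ h3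
    exact (hmemG f).mpr (Ideal.mul_mem_right _ _ ((hmk0 f).mp h5))
  · right
    intro g hg
    obtain ⟨v, hv, hveq⟩ := SLP.hl_iter hFmem hF0 hEmem hcommQ htopQ hfinQ
      c (i + c) D (by omega) _ (⟨g, hg, rfl⟩ : J.mkQ g ∈ Qs (i + c))
    rw [show i + c - c = i from by omega] at hv
    obtain ⟨f, hf, rfl⟩ := hv
    refine ⟨f, hf, ?_⟩
    rw [hmemG]
    have heq : (g - ℓ ^ c * f) * ℓ ^ D = ℓ ^ D * g - ℓ ^ (D + c) * f := by
      rw [pow_add]; ring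
    rw [heq]
    refine (hmk0 _).mp ?_
    rw [map_sub, ← hEpow, ← hEpow, hveq]
    exact sub_self _
end

section
/- Let F ∈ R be a homogeneous form such that R/Ann(F) has the strong Lefschetz property with a linear form λ as a strong Lefschetz element. Then for every integer d > 0, the Artinian Gorenstein algebra R/Ann(λ^d ∘ F) has the strong Lefschetz property with λ as a strong Lefschetz element. -/
open MvPolynomial

/-- The apolarity (contraction) action `g ∘ F`: apply to `F` the differential operator
obtained from `g` by substituting `∂/∂x_i` for `x_i`. -/
noncomputable def apol {n : ℕ} {k : Type} [Field k]
    (g F : MvPolynomial (Fin n) k) : MvPolynomial (Fin n) k :=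
  ∑ s ∈ g.support, ∑ u ∈ F.support,
    (g.coeff s * F.coeff u * ∏ i ∈ s.support, ((u i).descFactorial (s i) : k)) •
      monomial (u - s) (1 : k)

variable {n : ℕ} {k : Type} [Field k]

lemma apol_eq_sum {g F : MvPolynomial (Fin n) k} {A B : Finset ((Fin n) →₀ ℕ)}
    (hA : g.support ⊆ A) (hB : F.support ⊆ B) :
    apol g F = ∑ s ∈ A, ∑ u ∈ B,
      (g.coeff s * F.coeff u * ∏ i ∈ s.support, ((u i).descFactorial (s i) : k)) •
        monomial (u - s) (1 : k) := by
  unfold apol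
  rw [Finset.sum_subset hA (fun s _ hs => by
    simp [MvPolynomial.notMem_support_iff.mp hs])]
  refine Finset.sum_congr rfl fun s _ => ?_
  exact Finset.sum_subset hB (fun u _ hu => by
    simp [MvPolynomial.notMem_support_iff.mp hu])

lemma apol_zero_right (g : MvPolynomial (Fin n) k) : apol g 0 = 0 := by
  unfold apol; simp

lemma apol_zero_left (F : MvPolynomial (Fin n) k) : apol 0 F = 0 := by
  unfold apol; simp

lemma apol_add_right (g F G : MvPolynomial (Fin n) k) :
    apol g (F + G) = apol g F + apol g G := by
  rw [apol_eq_sum (A := g.support) (B := F.support ∪ G.support) subset_rfl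
      (fun x hx => MvPolynomial.support_add hx),
    apol_eq_sum (A := g.support) (B := F.support ∪ G.support) subset_rfl
      Finset.subset_union_left,
    apol_eq_sum (A := g.support) (B := F.support ∪ G.support) subset_rfl
      Finset.subset_union_right, ← Finset.sum_add_distrib]
  refine Finset.sum_congr rfl fun s _ => ?_
  rw [← Finset.sum_add_distrib]
  refine Finset.sum_congr rfl fun u _ => ?_
  rw [MvPolynomial.coeff_add, mul_add, add_mul, add_smul]

lemma apol_add_left (g h F : MvPolynomial (Fin n) k) :
    apol (g + h) F = apol g F + apol h F := by
  rw [apol_eq_sum (A := g.support ∪ h.support) (B := F.support)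
      (fun x hx => MvPolynomial.support_add hx) subset_rfl,
    apol_eq_sum (A := g.support ∪ h.support) (B := F.support)
      Finset.subset_union_left subset_rfl,
    apol_eq_sum (A := g.support ∪ h.support) (B := F.support)
      Finset.subset_union_right subset_rfl, ← Finset.sum_add_distrib]
  refine Finset.sum_congr rfl fun s _ => ?_
  rw [← Finset.sum_add_distrib]
  refine Finset.sum_congr rfl fun u _ => ?_
  rw [MvPolynomial.coeff_add, add_mul, add_mul, add_smul]

lemma apol_sum_right {ι : Type*} (g : MvPolynomial (Fin n) k) (A : Finset ι)
    (P : ι → MvPolynomial (Fin n) k) :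
    apol g (∑ x ∈ A, P x) = ∑ x ∈ A, apol g (P x) := by
  classical
  induction A using Finset.induction with
  | empty => simp [apol_zero_right]
  | insert _ _ hx ih => simp [Finset.sum_insert hx, apol_add_right, ih]

lemma apol_sum_left {ι : Type*} (A : Finset ι) (P : ι → MvPolynomial (Fin n) k)
    (F : MvPolynomial (Fin n) k) :
    apol (∑ x ∈ A, P x) F = ∑ x ∈ A, apol (P x) F := by
  classical
  induction A using Finset.induction with
  | empty => simp [apol_zero_left]
  | insert _ _ hx ih => simp [Finset.sum_insert hx, apol_add_left, ih]

lemma apol_monomial_monomial (s u : (Fin n) →₀ ℕ) (a b : k) :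
    apol (monomial s a) (monomial u b) =
      (a * b * ∏ i, ((u i).descFactorial (s i) : k)) • monomial (u - s) (1 : k) := by
  rw [apol_eq_sum (A := {s}) (B := {u}) (MvPolynomial.support_monomial_subset)
    (MvPolynomial.support_monomial_subset)]
  simp only [Finset.sum_singleton, MvPolynomial.coeff_monomial, if_pos rfl]
  congr 2
  refine Finset.prod_subset (Finset.subset_univ _) fun i _ hi => ?_
  rw [Finsupp.notMem_support_iff.mp hi]
  simp

lemma desc_add (m a b : ℕ) :
    m.descFactorial (a + b) = m.descFactorial a * (m - a).descFactorial b := by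
  induction b with
  | zero => simp
  | succ b ih =>
    rw [← Nat.add_assoc, Nat.descFactorial_succ, Nat.descFactorial_succ, ih, Nat.sub_sub]
    ring

lemma apol_mono_comp (s t u : (Fin n) →₀ ℕ) (a b c : k) :
    apol (monomial s a) (apol (monomial t b) (monomial u c)) =
      apol (monomial s a * monomial t b) (monomial u c) := by
  rw [MvPolynomial.monomial_mul, apol_monomial_monomial, apol_monomial_monomial,
    MvPolynomial.smul_monomial, smul_eq_mul, mul_one, apol_monomial_monomial]
  rw [tsub_tsub, add_comm t s]
  congr 1
  have key : (∏ i, ((u i).descFactorial ((s + t) i) : k)) =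
      (∏ i, ((u i).descFactorial (t i) : k)) * ∏ i, (((u - t) i).descFactorial (s i) : k) := by
    rw [← Finset.prod_mul_distrib]
    refine Finset.prod_congr rfl fun i _ => ?_
    rw [Finsupp.add_apply, Finsupp.tsub_apply, add_comm (s i) (t i),
      desc_add (u i) (t i) (s i)]
    push_cast
    ring
  rw [key]
  ring

lemma prod_desc_support (t u : (Fin n) →₀ ℕ) :
    (∏ i ∈ t.support, ((u i).descFactorial (t i) : k)) =
      ∏ i, ((u i).descFactorial (t i) : k) :=
  Finset.prod_subset (Finset.subset_univ _) (fun i _ hi => by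
    rw [Finsupp.notMem_support_iff.mp hi]; simp)

lemma apol_as_sum (h F : MvPolynomial (Fin n) k) :
    apol h F = ∑ t ∈ h.support, ∑ u ∈ F.support,
      apol (monomial t (h.coeff t)) (monomial u (F.coeff u)) := by
  trans (∑ t ∈ h.support, ∑ u ∈ F.support,
      (h.coeff t * F.coeff u * ∏ i ∈ t.support, ((u i).descFactorial (t i) : k)) •
        monomial (u - t) (1 : k))
  · rfl
  · refine Finset.sum_congr rfl fun t _ => Finset.sum_congr rfl fun u _ => ?_
    rw [apol_monomial_monomial, prod_desc_support]

lemma apol_left_as_sum (g X : MvPolynomial (Fin n) k) :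
    apol g X = ∑ s ∈ g.support, apol (monomial s (g.coeff s)) X := by
  conv_lhs => rw [g.as_sum]
  rw [apol_sum_left]

lemma apol_right_as_sum (g X : MvPolynomial (Fin n) k) :
    apol g X = ∑ u ∈ X.support, apol g (monomial u (X.coeff u)) := by
  conv_lhs => rw [X.as_sum]
  rw [apol_sum_right]

lemma apol_apol (g h F : MvPolynomial (Fin n) k) :
    apol g (apol h F) = apol (g * h) F := by
  have lhs : apol g (apol h F) = ∑ t ∈ h.support, ∑ u ∈ F.support, ∑ s ∈ g.support,
      apol (monomial s (g.coeff s) * monomial t (h.coeff t)) (monomial u (F.coeff u)) := by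
    rw [apol_as_sum h F, apol_sum_right]
    refine Finset.sum_congr rfl fun t _ => ?_
    rw [apol_sum_right]
    refine Finset.sum_congr rfl fun u _ => ?_
    rw [apol_left_as_sum]
    exact Finset.sum_congr rfl fun s _ => apol_mono_comp _ _ _ _ _ _
  have rhs : apol (g * h) F = ∑ s ∈ g.support, ∑ t ∈ h.support, ∑ u ∈ F.support,
      apol (monomial s (g.coeff s) * monomial t (h.coeff t)) (monomial u (F.coeff u)) := by
    have : g * h = ∑ s ∈ g.support, ∑ t ∈ h.support,
        monomial s (g.coeff s) * monomial t (h.coeff t) := by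
      conv_lhs => rw [g.as_sum, h.as_sum]
      rw [Finset.sum_mul_sum]
    rw [this, apol_sum_left]
    refine Finset.sum_congr rfl fun s _ => ?_
    rw [apol_sum_left]
    refine Finset.sum_congr rfl fun t _ => ?_
    exact apol_right_as_sum _ _
  rw [lhs, rhs]
  trans (∑ t ∈ h.support, ∑ s ∈ g.support, ∑ u ∈ F.support,
      apol (monomial s (g.coeff s) * monomial t (h.coeff t)) (monomial u (F.coeff u)))
  · exact Finset.sum_congr rfl fun t _ => Finset.sum_comm
  · exact Finset.sum_comm

/-- `R/Ann(F)` has the strong Lefschetz property with the linear form `lam` as strong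
Lefschetz element: multiplication by `lam^c` from degree `i` to degree `i + c` of
`R/Ann(F)` is injective or surjective, for all `i, c`. -/
def annSLP {n : ℕ} {k : Type} [Field k]
    (lam F : MvPolynomial (Fin n) k) : Prop :=
  ∀ i c : ℕ,
    (∀ f : MvPolynomial (Fin n) k, f.IsHomogeneous i →
      apol (lam ^ c * f) F = 0 → apol f F = 0) ∨
    (∀ g : MvPolynomial (Fin n) k, g.IsHomogeneous (i + c) →
      ∃ f : MvPolynomial (Fin n) k, f.IsHomogeneous i ∧ apol (g - lam ^ c * f) F = 0)

/-- If `R/Ann(F)` has the SLP with a linear form `lam` as strong Lefschetz element,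
then for every `d > 0` the Artinian Gorenstein algebra `R/Ann(lam^d ∘ F)` has the SLP
with `lam` as a strong Lefschetz element. -/
theorem stmt13 (n : ℕ) (k : Type) [Field k] [CharZero k]
    (F : MvPolynomial (Fin n) k) (D : ℕ) (hF : F.IsHomogeneous D)
    (lam : MvPolynomial (Fin n) k) (hlam : lam.IsHomogeneous 1)
    (hSLP : annSLP lam F)
    (d : ℕ) (hd : 0 < d) :
    annSLP lam (apol (lam ^ d) F) := by
  intro i c
  rcases hSLP i (c + d) with h | h
  · left
    intro f hf h0
    rw [apol_apol] at h0
    rw [show lam ^ c * f * lam ^ d = lam ^ (c + d) * f by rw [pow_add]; ring] at h0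
    have h2 := h f hf h0
    rw [apol_apol, show f * lam ^ d = lam ^ d * f by ring, ← apol_apol, h2, apol_zero_right]
  · right
    intro g hg
    have hg' : (lam ^ d * g).IsHomogeneous (i + (c + d)) := by
      have h1 := (hlam.pow d).mul hg
      have h2 : 1 * d + (i + c) = i + (c + d) := by ring
      rwa [h2] at h1
    obtain ⟨f, hf, h0⟩ := h (lam ^ d * g) hg'
    refine ⟨f, hf, ?_⟩
    rw [apol_apol,
      show (g - lam ^ c * f) * lam ^ d = lam ^ d * g - lam ^ (c + d) * f by rw [pow_add]; ring]
    exact h0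
end

section
/- Let n ≥ 1 and 1 ≤ d ≤ n be integers and set l = ⌊(n-d)/2⌋. Then the number of strictly increasing sequences 1 ≤ i_1 < i_2 < ⋯ < i_{l+1} ≤ n satisfying i_j ≤ d + 2(j-1) for all 1 ≤ j ≤ l+1 equals \binom{n}{l+1} - \binom{n}{l+1+d}. -/
/-- Auxiliary set: strictly increasing `k`-tuples in `[1,n]` with `f j ≤ d + 2*j`. -/
def stmt18P (n k d : ℕ) : Set (Fin k → ℕ) :=
  {f | StrictMono f ∧ (∀ j, 1 ≤ f j ∧ f j ≤ n) ∧ ∀ j : Fin k, f j ≤ d + 2 * (j : ℕ)}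

lemma stmt18P_finite (n k d : ℕ) : (stmt18P n k d).Finite := by
  apply Set.Finite.subset
    (Set.Finite.pi (fun _ : Fin k => Set.finite_Icc 1 n) :
      (Set.pi Set.univ fun _ : Fin k => Set.Icc 1 n).Finite)
  intro f hf
  simp only [Set.mem_pi, Set.mem_univ, Set.mem_Icc, forall_true_left]
  exact fun j => hf.2.1 j

lemma stmt18P_zero (n d : ℕ) (h : n < d) :
    ((stmt18P n 0 d).ncard : ℤ) = (n.choose 0 : ℤ) - (n.choose (0 + d) : ℤ) := by
  have huniv : stmt18P n 0 d = Set.univ := by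
    ext f
    simp only [stmt18P, Set.mem_setOf_eq, Set.mem_univ, iff_true]
    exact ⟨fun i _ _ => i.elim0, fun j => j.elim0, fun j => j.elim0⟩
  rw [huniv, Set.ncard_univ, Nat.card_unique,
    Nat.choose_eq_zero_of_lt (show n < 0 + d by omega), Nat.choose_zero_right]
  simp

lemma stmt18_snoc_strictMono {m : ℕ} {g : Fin m → ℕ} {c : ℕ} (hg : StrictMono g)
    (hc : ∀ i, g i < c) : StrictMono (Fin.snoc g c) := by
  intro i j hij
  induction j using Fin.lastCases with
  | last =>
    induction i using Fin.lastCases with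
    | last => exact absurd hij (lt_irrefl _)
    | cast i =>
      simp only [Fin.snoc_castSucc, Fin.snoc_last]
      exact hc i
  | cast j =>
    induction i using Fin.lastCases with
    | last => exact absurd (hij.trans (Fin.castSucc_lt_last j)) (lt_irrefl _)
    | cast i =>
      simp only [Fin.snoc_castSucc]
      exact hg (Fin.castSucc_lt_castSucc_iff.mp hij)

lemma stmt18_main : ∀ n d k, 1 ≤ d → n < 2 * k + d →
    ((stmt18P n k d).ncard : ℤ) = (n.choose k : ℤ) - (n.choose (k + d) : ℤ) := by
  intro n
  induction n with
  | zero =>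
    intro d k hd hk
    rcases Nat.eq_zero_or_pos k with rfl | hk0
    · exact stmt18P_zero 0 d (by omega)
    · have : stmt18P 0 k d = ∅ := by
        ext f
        simp only [stmt18P, Set.mem_setOf_eq, Set.mem_empty_iff_false, iff_false]
        rintro ⟨-, h2, -⟩
        have := h2 ⟨0, hk0⟩
        omega
      rw [this, Set.ncard_empty]
      rw [Nat.choose_eq_zero_of_lt hk0, Nat.choose_eq_zero_of_lt (by omega)]
      simp
  | succ n IH =>
    intro d k hd hk
    rcases Nat.eq_zero_or_pos k with rfl | hk0
    · exact stmt18P_zero (n+1) d (by omega)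
    obtain ⟨m, rfl⟩ : ∃ m, k = m + 1 := ⟨k - 1, by omega⟩
    -- split the set according to the last value
    set A : Set (Fin (m+1) → ℕ) := {f ∈ stmt18P (n+1) (m+1) d | f (Fin.last m) ≤ n} with hA
    set B : Set (Fin (m+1) → ℕ) := {f ∈ stmt18P (n+1) (m+1) d | f (Fin.last m) = n+1} with hB
    have hsplit : stmt18P (n+1) (m+1) d = A ∪ B := by
      ext f
      simp only [hA, hB, Set.mem_union, Set.mem_setOf_eq]
      constructor
      · intro hf
        have := (hf.2.1 (Fin.last m)).2
        rcases Nat.lt_or_ge (f (Fin.last m)) (n+1) with h | h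
        · exact Or.inl ⟨hf, by omega⟩
        · exact Or.inr ⟨hf, by omega⟩
      · rintro (⟨hf, -⟩ | ⟨hf, -⟩) <;> exact hf
    have hAeq : A = stmt18P n (m+1) d := by
      ext f
      simp only [hA, Set.mem_setOf_eq, stmt18P]
      constructor
      · rintro ⟨⟨h1, h2, h3⟩, h4⟩
        refine ⟨h1, fun j => ⟨(h2 j).1, ?_⟩, h3⟩
        exact le_trans (h1.monotone (Fin.le_last j)) h4
      · rintro ⟨h1, h2, h3⟩
        exact ⟨⟨h1, fun j => ⟨(h2 j).1, le_trans (h2 j).2 (by omega)⟩, h3⟩,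
          (h2 (Fin.last m)).2⟩
    have hdisj : Disjoint A B := by
      rw [Set.disjoint_left]
      rintro f ⟨-, h1⟩ ⟨-, h2⟩
      omega
    have hAfin : A.Finite := hAeq ▸ stmt18P_finite n (m+1) d
    have hBfin : B.Finite :=
      Set.Finite.subset (stmt18P_finite (n+1) (m+1) d) (fun f hf => hf.1)
    have hcard : ((stmt18P (n+1) (m+1) d).ncard : ℤ) = A.ncard + B.ncard := by
      rw [hsplit, Set.ncard_union_eq hdisj hAfin hBfin]
      push_cast; ring
    have p1 : (n+1).choose (m+1) = n.choose m + n.choose (m+1) :=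
      Nat.choose_succ_succ n m
    have p2 : (n+1).choose (m+1+d) = n.choose (m+d) + n.choose (m+1+d) := by
      have h : m + 1 + d = (m + d) + 1 := by ring
      rw [h, Nat.choose_succ_succ]
    have hAcard := IH d (m+1) hd (by omega)
    rcases Nat.lt_or_ge (d + 2 * m) (n + 1) with hcase | hcase
    · -- boundary case: no tuple can end at n+1, and n = d + 2m
      have hn : n = d + 2 * m := by omega
      have hBempty : B = ∅ := by
        ext f
        simp only [hB, Set.mem_setOf_eq, Set.mem_empty_iff_false, iff_false]
        rintro ⟨⟨-, -, h3⟩, h4⟩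
        have := h3 (Fin.last m)
        simp only [Fin.val_last] at this
        omega
      rw [hcard, hBempty, Set.ncard_empty, hAeq, hAcard]
      have psym : n.choose m = n.choose (m + d) := by
        have h1 : m + d = n - m := by omega
        rw [h1, Nat.choose_symm (by omega)]
      push_cast [p1, p2, psym]
      ring
    · -- generic case: Pascal on both counts
      have hBimg : B = (fun g : Fin m → ℕ => Fin.snoc g (n+1)) '' stmt18P n m d := by
        ext f
        simp only [hB, Set.mem_setOf_eq, Set.mem_image, stmt18P]
        constructor
        · rintro ⟨⟨h1, h2, h3⟩, h4⟩
          refine ⟨fun i => f i.castSucc, ⟨?_, ?_, ?_⟩, ?_⟩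
          · exact fun i j hij => h1 (Fin.castSucc_lt_castSucc_iff.mpr hij)
          · intro j
            have hlt : f j.castSucc < f (Fin.last m) := h1 (Fin.castSucc_lt_last j)
            refine ⟨(h2 j.castSucc).1, ?_⟩
            show f j.castSucc ≤ n
            omega
          · intro j
            exact (by simpa using h3 j.castSucc : f j.castSucc ≤ d + 2 * (j : ℕ))
          · rw [← h4]; exact Fin.snoc_init_self f
        · rintro ⟨g, ⟨h1, h2, h3⟩, rfl⟩
          have hsm : StrictMono (Fin.snoc g (n+1) : Fin (m+1) → ℕ) :=
            stmt18_snoc_strictMono h1 (fun i => by have := (h2 i).2; omega)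
          refine ⟨⟨hsm, ?_, ?_⟩, by simp⟩
          · intro j
            induction j using Fin.lastCases with
            | last => simp only [Fin.snoc_last]; omega
            | cast i =>
              simp only [Fin.snoc_castSucc]
              exact ⟨(h2 i).1, by have := (h2 i).2; omega⟩
          · intro j
            induction j using Fin.lastCases with
            | last =>
              simp only [Fin.snoc_last, Fin.val_last]
              omega
            | cast i =>
              simp only [Fin.snoc_castSucc, Fin.coe_castSucc]
              exact h3 i
      have hsnoc_inj : Function.Injective (fun g : Fin m → ℕ => (Fin.snoc g (n+1) : Fin (m+1) → ℕ)) := by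
        intro g1 g2 h
        have := congrArg Fin.init h
        simpa [Fin.init_snoc] using this
      have hBcard : B.ncard = (stmt18P n m d).ncard := by
        rw [hBimg, Set.ncard_image_of_injective _ hsnoc_inj]
      have hBcard' := IH d m hd (by omega)
      rw [hcard, hAeq, hAcard, hBcard, hBcard']
      push_cast [p1, p2]
      ring

/-- For `1 ≤ d ≤ n` and `l = ⌊(n-d)/2⌋`, the number of strictly increasing sequences
`1 ≤ i_1 < ⋯ < i_{l+1} ≤ n` with `i_j ≤ d + 2(j-1)` for all `j` equals
`binom(n, l+1) - binom(n, l+1+d)`. -/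
theorem stmt18 (n d : ℕ) (hn : 1 ≤ n) (hd1 : 1 ≤ d) (hdn : d ≤ n)
    (l : ℕ) (hl : l = (n - d) / 2) :
    (({f : Fin (l + 1) → ℕ | StrictMono f ∧ (∀ j, 1 ≤ f j ∧ f j ≤ n) ∧
        ∀ j : Fin (l + 1), f j ≤ d + 2 * (j : ℕ)}.ncard : ℤ))
      = (n.choose (l + 1) : ℤ) - (n.choose (l + 1 + d) : ℤ) := by
  exact stmt18_main n d (l + 1) hd1 (by omega)
end
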